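/- Let r, s ≥ 3 be odd integers, let p ∈ (0, 1/2), q ∈ (1/2, 1), w > 0, and α, β > 0 with α·β ≥ 1/2. With f(x,j) = (-x)^j(1-x) + (1-x)^j x, the function F(y) = α · (1/((r-1)!(s+1)!)) · f(p,r-1) f(q,s+1) w^{s+1} y^{r-1} + (1/(r! s!)) · f(p,r) f(q,s) w^s y^r + β · (1/((r+1)!(s-1)!)) · f(p,r+1) f(q,s-1) w^{s-1} y^{r+1} is strictly increasing in y on (0, ∞). -/

import Mathlib

noncomputable def f (x : ℝ) (j : ℕ) : ℝ := (-x)^j * (1-x) + (1-x)^j * x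

lemma f_even (x : ℝ) (j : ℕ) : f x (2*j) = x^(2*j) * (1-x) + (1-x)^(2*j) * x := by
  simp [f, Even.neg_pow (even_two_mul j)]

lemma f_odd (x : ℝ) (j : ℕ) : f x (2*j+1) = x*(1-x)*((1-x)^(2*j) - x^(2*j)) := by
  rw [f, Odd.neg_pow ⟨j, by ring⟩]; ring

lemma f_even_pos (x : ℝ) (hx : 0 < x) (hx1 : x < 1) (j : ℕ) : 0 < f x (2*j) := by
  rw [f_even]
  have h1 : 0 < 1 - x := by linarith
  positivity

lemma f_odd_pos (x : ℝ) (hx : 0 < x) (hx2 : x < 1/2) (j : ℕ) (hj : j ≠ 0) :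
    0 < f x (2*j+1) := by
  rw [f_odd]
  have h1 : 0 < 1 - x := by linarith
  have h2 : x^(2*j) < (1-x)^(2*j) := pow_lt_pow_left₀ (by linarith) hx.le (by omega)
  have := mul_pos hx h1
  nlinarith

lemma f_odd_neg (x : ℝ) (hx : 1/2 < x) (hx1 : x < 1) (j : ℕ) (hj : j ≠ 0) :
    f x (2*j+1) < 0 := by
  rw [f_odd]
  have h1 : 0 < 1 - x := by linarith
  have hx0 : 0 < x := by linarith
  have h2 : (1-x)^(2*j) < x^(2*j) := pow_lt_pow_left₀ (by linarith) h1.le (by omega)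
  have := mul_pos hx0 h1
  nlinarith

lemma f_id (x : ℝ) (k : ℕ) :
    f x (2*k+2) * f x (2*k+4) = (f x (2*k+3))^2 + (x*(1-x))^(2*k+3) := by
  have e1 : 2*k+2 = 2*(k+1) := by ring
  have e2 : 2*k+4 = 2*(k+2) := by ring
  have e3 : 2*k+3 = 2*(k+1)+1 := by ring
  rw [e1, e2, e3, f_even, f_even, f_odd]
  have p1 : x^(2*(k+2)) = x^(2*(k+1)) * x^2 := by rw [← pow_add]; ring_nf
  have p2 : (1-x)^(2*(k+2)) = (1-x)^(2*(k+1)) * (1-x)^2 := by rw [← pow_add]; ring_nf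
  have p3 : (x*(1-x))^(2*(k+1)+1) = x^(2*(k+1)) * (1-x)^(2*(k+1)) * (x*(1-x)) := by
    rw [mul_pow, pow_succ, pow_succ]; ring
  rw [p1, p2, p3]
  ring

lemma key_ineq (m n Fr Fs α β a1 a2 a3 b1 b2 b3 P Q W w : ℝ)
    (hm : 3 ≤ m) (hn : 3 ≤ n) (hFr : 0 < Fr) (hFs : 0 < Fs)
    (hαβ : 1/2 ≤ α * β)
    (hW : 0 < W) (hw : 0 < w)
    (ha1 : 0 < a1) (ha3 : 0 < a3) (hb1 : 0 < b1) (hb3 : 0 < b3)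
    (hP : 0 < P) (hQ : 0 < Q)
    (id1 : a1*a3 = a2^2 + P) (id2 : b1*b3 = b2^2 + Q) :
    (m * ((1/(m*Fr)) * (1/(n*Fs)) * a2 * b2 * (W*w)))^2
      < 4 * ((m-1) * (α * (1/Fr) * (1/((n+1)*n*Fs)) * a1 * b3 * (W*w^2)))
          * ((m+1) * (β * (1/((m+1)*m*Fr)) * (1/Fs) * a3 * b1 * W)) := by
  have hm0 : 0 < m := by linarith
  have hn0 : 0 < n := by linarith
  have hm1 : 0 < m + 1 := by linarith
  have hn1 : 0 < n + 1 := by linarith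
  have h3 : 0 < a1*a3*(b1*b3) := by positivity
  have key : m*(n+1)*(a2^2*b2^2) < 4*(m-1)*n*(α*β)*(a1*a3*(b1*b3)) := by
    have h1 : a2^2*b2^2 < a1*a3*(b1*b3) := by
      rw [id1, id2]
      nlinarith [mul_pos hP hQ, mul_nonneg (sq_nonneg a2) hQ.le,
        mul_nonneg (sq_nonneg b2) hP.le]
    have h2 : m*(n+1) ≤ 2*(m-1)*n := by nlinarith
    have hsq : (0:ℝ) ≤ a2^2*b2^2 := by positivity
    have hc : 0 < 2*(m-1)*n := by nlinarith
    have h4 : m*(n+1)*(a2^2*b2^2) ≤ 2*(m-1)*n*(a2^2*b2^2) :=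
      mul_le_mul_of_nonneg_right h2 hsq
    have h5 : 2*(m-1)*n*(a2^2*b2^2) < 2*(m-1)*n*(a1*a3*(b1*b3)) := by
      have := mul_lt_mul_of_pos_left h1 hc
      linarith [this]
    have h6 : 2*(m-1)*n*(a1*a3*(b1*b3)) ≤ 4*(m-1)*n*(α*β)*(a1*a3*(b1*b3)) := by
      have hmnX : 0 ≤ (m-1)*n*(a1*a3*(b1*b3)) :=
        mul_nonneg (mul_nonneg (by linarith) hn0.le) h3.le
      have h := mul_le_mul_of_nonneg_left (show (2:ℝ) ≤ 4*(α*β) by linarith) hmnX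
      ring_nf at h ⊢
      linarith
    linarith
  have L : (m * ((1/(m*Fr)) * (1/(n*Fs)) * a2 * b2 * (W*w)))^2
      = (a2^2*b2^2)*(W*w)^2 / (n^2*(Fr*Fs)^2) := by
    field_simp
  have R : 4 * ((m-1) * (α * (1/Fr) * (1/((n+1)*n*Fs)) * a1 * b3 * (W*w^2)))
          * ((m+1) * (β * (1/((m+1)*m*Fr)) * (1/Fs) * a3 * b1 * W))
      = (4*(m-1)*n*(α*β)*(a1*a3*(b1*b3)))*(W*w)^2 / ((m*(n+1))*(n^2*(Fr*Fs)^2)) := by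
    field_simp
  rw [L, R, div_lt_div_iff₀ (by positivity) (by positivity)]
  have final := mul_lt_mul_of_pos_right key
    (show (0:ℝ) < (W*w)^2 * (n^2*(Fr*Fs)^2) from by positivity)
  calc (a2^2*b2^2)*(W*w)^2 * ((m*(n+1))*(n^2*(Fr*Fs)^2))
      = m*(n+1)*(a2^2*b2^2) * ((W*w)^2 * (n^2*(Fr*Fs)^2)) := by ring
    _ < 4*(m-1)*n*(α*β)*(a1*a3*(b1*b3)) * ((W*w)^2 * (n^2*(Fr*Fs)^2)) := final
    _ = (4*(m-1)*n*(α*β)*(a1*a3*(b1*b3)))*(W*w)^2 * (n^2*(Fr*Fs)^2) := by ring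

lemma quad_pos (a b c t : ℝ) (ha : 0 < a) (hd : b^2 < 4*a*c) :
    0 < a*t^2 + b*t + c := by
  nlinarith [sq_nonneg (2*a*t + b)]

theorem stmt_8 (r s : ℕ) (hr : Odd r) (hr3 : 3 ≤ r) (hs : Odd s) (hs3 : 3 ≤ s)
    (p q w α β : ℝ) (hp : 0 < p) (hp2 : p < 1/2) (hq : 1/2 < q) (hq1 : q < 1)
    (hw : 0 < w) (hα : 0 < α) (hβ : 0 < β) (hαβ : 1/2 ≤ α * β) :
    StrictMonoOn (fun y : ℝ =>
      α * (1 / (Nat.factorial (r-1) : ℝ)) * (1 / (Nat.factorial (s+1) : ℝ)) *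
        f p (r-1) * f q (s+1) * w^(s+1) * y^(r-1)
      + (1 / (Nat.factorial r : ℝ)) * (1 / (Nat.factorial s : ℝ)) *
        f p r * f q s * w^s * y^r
      + β * (1 / (Nat.factorial (r+1) : ℝ)) * (1 / (Nat.factorial (s-1) : ℝ)) *
        f p (r+1) * f q (s-1) * w^(s-1) * y^(r+1)) (Set.Ioi 0) := by
  obtain ⟨k, rfl⟩ : ∃ k, r = 2*k+3 := by
    obtain ⟨t, ht⟩ := hr; exact ⟨t-1, by omega⟩
  obtain ⟨l, rfl⟩ : ∃ l, s = 2*l+3 := by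
    obtain ⟨t, ht⟩ := hs; exact ⟨t-1, by omega⟩
  have er1 : 2*k+3-1 = 2*k+2 := by omega
  have es1 : 2*l+3-1 = 2*l+2 := by omega
  have er2 : 2*k+3+1 = 2*k+4 := by omega
  have es2 : 2*l+3+1 = 2*l+4 := by omega
  simp only [er1, es1, er2, es2]
  have hp1 : p < 1 := by linarith
  have hq0 : 0 < q := by linarith
  -- f values
  have ha1 : 0 < f p (2*k+2) := by
    have := f_even_pos p hp hp1 (k+1); rwa [show 2*(k+1) = 2*k+2 by ring] at this
  have ha2 : 0 < f p (2*k+3) := by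
    have := f_odd_pos p hp hp2 (k+1) (by omega)
    rwa [show 2*(k+1)+1 = 2*k+3 by ring] at this
  have ha3 : 0 < f p (2*k+4) := by
    have := f_even_pos p hp hp1 (k+2); rwa [show 2*(k+2) = 2*k+4 by ring] at this
  have hb1 : 0 < f q (2*l+2) := by
    have := f_even_pos q hq0 hq1 (l+1); rwa [show 2*(l+1) = 2*l+2 by ring] at this
  have hb3 : 0 < f q (2*l+4) := by
    have := f_even_pos q hq0 hq1 (l+2); rwa [show 2*(l+2) = 2*l+4 by ring] at this
  have id1 := f_id p k
  have id2' := f_id q l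
  have id2 : f q (2*l+2) * f q (2*l+4) = (f q (2*l+3))^2 + (q*(1-q))^(2*l+3) := id2'
  have hP : 0 < (p*(1-p))^(2*k+3) := by
    have : 0 < p*(1-p) := mul_pos hp (by linarith)
    positivity
  have hQ : 0 < (q*(1-q))^(2*l+3) := by
    have : 0 < q*(1-q) := mul_pos hq0 (by linarith)
    positivity
  -- factorials
  have hFr : (0:ℝ) < ((2*k+2).factorial : ℝ) :=
    Nat.cast_pos.mpr (Nat.factorial_pos _)
  have hFs : (0:ℝ) < ((2*l+2).factorial : ℝ) :=
    Nat.cast_pos.mpr (Nat.factorial_pos _)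
  have hfr3 : (((2*k+3).factorial : ℕ) : ℝ)
      = (2*(k:ℝ)+3) * ((2*k+2).factorial : ℝ) := by
    rw [show 2*k+3 = (2*k+2)+1 from rfl, Nat.factorial_succ]
    push_cast; ring
  have hfr4 : (((2*k+4).factorial : ℕ) : ℝ)
      = ((2*(k:ℝ)+3)+1) * ((2*(k:ℝ)+3) * ((2*k+2).factorial : ℝ)) := by
    rw [show 2*k+4 = (2*k+3)+1 from rfl, Nat.factorial_succ, ← hfr3]
    push_cast; ring
  have hfs3 : (((2*l+3).factorial : ℕ) : ℝ)
      = (2*(l:ℝ)+3) * ((2*l+2).factorial : ℝ) := by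
    rw [show 2*l+3 = (2*l+2)+1 from rfl, Nat.factorial_succ]
    push_cast; ring
  have hfs4 : (((2*l+4).factorial : ℕ) : ℝ)
      = ((2*(l:ℝ)+3)+1) * ((2*(l:ℝ)+3) * ((2*l+2).factorial : ℝ)) := by
    rw [show 2*l+4 = (2*l+3)+1 from rfl, Nat.factorial_succ, ← hfs3]
    push_cast; ring
  set A : ℝ := α * (1 / ((2*k+2).factorial : ℝ)) * (1 / ((2*l+4).factorial : ℝ)) *
      f p (2*k+2) * f q (2*l+4) * w^(2*l+4) with hA
  set B : ℝ := (1 / ((2*k+3).factorial : ℝ)) * (1 / ((2*l+3).factorial : ℝ)) *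
      f p (2*k+3) * f q (2*l+3) * w^(2*l+3) with hB
  set C : ℝ := β * (1 / ((2*k+4).factorial : ℝ)) * (1 / ((2*l+2).factorial : ℝ)) *
      f p (2*k+4) * f q (2*l+2) * w^(2*l+2) with hC
  have hApos : 0 < A := by rw [hA]; positivity
  have hCpos : 0 < C := by rw [hC]; positivity
  -- the discriminant inequality
  have hd0 := key_ineq (2*(k:ℝ)+3) (2*(l:ℝ)+3) ((2*k+2).factorial : ℝ)
      ((2*l+2).factorial : ℝ) α β (f p (2*k+2)) (f p (2*k+3)) (f p (2*k+4))
      (f q (2*l+2)) (f q (2*l+3)) (f q (2*l+4))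
      ((p*(1-p))^(2*k+3)) ((q*(1-q))^(2*l+3)) (w^(2*l+2)) w
      (by push_cast; linarith [Nat.cast_nonneg (α := ℝ) k])
      (by push_cast; linarith [Nat.cast_nonneg (α := ℝ) l])
      hFr hFs hαβ (by positivity) hw ha1 ha3 hb1 hb3 hP hQ id1 id2
  have hdisc : ((2*(k:ℝ)+3) * B)^2
      < 4 * ((2*(k:ℝ)+4) * C) * ((2*(k:ℝ)+2) * A) := by
    have e1 : ((2*(k:ℝ)+3) * B)^2
        = ((2*(k:ℝ)+3) * ((1/((2*(k:ℝ)+3) * ((2*k+2).factorial : ℝ)))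
          * (1/((2*(l:ℝ)+3) * ((2*l+2).factorial : ℝ))) * f p (2*k+3) * f q (2*l+3)
          * (w^(2*l+2)*w)))^2 := by
      rw [hB, hfr3, hfs3]
      congr 2
    have e2 : 4 * ((2*(k:ℝ)+4) * C) * ((2*(k:ℝ)+2) * A)
        = 4 * (((2*(k:ℝ)+3)-1) * (α * (1/((2*k+2).factorial : ℝ))
            * (1/(((2*(l:ℝ)+3)+1)*(2*(l:ℝ)+3)*((2*l+2).factorial : ℝ)))
            * f p (2*k+2) * f q (2*l+4) * (w^(2*l+2)*w^2)))
          * (((2*(k:ℝ)+3)+1) * (β * (1/(((2*(k:ℝ)+3)+1)*(2*(k:ℝ)+3)*((2*k+2).factorial : ℝ)))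
            * (1/((2*l+2).factorial : ℝ)) * f p (2*k+4) * f q (2*l+2) * (w^(2*l+2)))) := by
      rw [hA, hC, hfr4, hfs4]
      rw [show 2*l+4 = (2*l+2)+2 from rfl, pow_add]
      ring
    rw [e1, e2]
    convert hd0 using 2 <;> ring
  refine strictMonoOn_of_deriv_pos (convex_Ioi 0) (by fun_prop) ?_
  intro x hx
  rw [interior_Ioi] at hx
  have hx0 : (0:ℝ) < x := hx
  have h1 := (hasDerivAt_pow (2*k+2) x).const_mul A
  have h2 := (hasDerivAt_pow (2*k+3) x).const_mul B
  have h3 := (hasDerivAt_pow (2*k+4) x).const_mul C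
  have hder := (h1.add h2).add h3
  rw [show (fun y : ℝ => A * y ^ (2 * k + 2) + B * y ^ (2 * k + 3) + C * y ^ (2 * k + 4)) = ((fun y => A * y ^ (2 * k + 2)) + (fun y => B * y ^ (2 * k + 3))) + (fun y => C * y ^ (2 * k + 4)) from rfl, hder.deriv]
  simp only [show 2*k+2-1 = 2*k+1 from by omega, show 2*k+3-1 = 2*k+2 from by omega,
    show 2*k+4-1 = 2*k+3 from by omega]
  push_cast
  have hquad : 0 < ((2*(k:ℝ)+4)*C)*x^2 + ((2*(k:ℝ)+3)*B)*x + ((2*(k:ℝ)+2)*A) :=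
    quad_pos _ _ _ x (by positivity) hdisc
  have hx1 : 0 < x^(2*k+1) := pow_pos hx0 _
  have expand : A * ((2*(k:ℝ)+2) * x^(2*k+1)) + B * ((2*(k:ℝ)+3) * x^(2*k+2))
      + C * ((2*(k:ℝ)+4) * x^(2*k+3))
      = x^(2*k+1) * (((2*(k:ℝ)+4)*C)*x^2 + ((2*(k:ℝ)+3)*B)*x + ((2*(k:ℝ)+2)*A)) := by
    rw [show 2*k+2 = (2*k+1)+1 from rfl, show 2*k+3 = (2*k+1)+2 from rfl,
      pow_succ, pow_add]
    ring
  rw [expand]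
  exact mul_pos hx1 hquad
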